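/- arXiv:2510.21301 — 2 statements merged into one kernel-verified Lean document; each statement's English description precedes it below -/
import Mathlib

section
/- If λ ∈ Γ̃_k (i.e. λ ∈ Γ_{k-1} and S_k(λ) > 0) and 1 ≤ l < k ≤ n, then σ_{k-1}(λ)σ_l(λ)/(C(n,k−1)C(n,l)) ≥ σ_k(λ)σ_{l-1}(λ)/(C(n,k)C(n,l−1)). -/
open Finset

noncomputable def esym (n : ℕ) (k : ℤ) (lam : Fin n → ℝ) : ℝ :=
  if 0 ≤ k then ∑ s ∈ (Finset.univ : Finset (Fin n)).powersetCard k.toNat, ∏ i ∈ s, lam i else 0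

noncomputable def esymDel (n : ℕ) (k : ℤ) (p : Fin n) (lam : Fin n → ℝ) : ℝ :=
  if 0 ≤ k then
    ∑ s ∈ ((Finset.univ : Finset (Fin n)).erase p).powersetCard k.toNat, ∏ i ∈ s, lam i
  else 0

noncomputable def sumHess (n : ℕ) (α : ℝ) (k : ℤ) (lam : Fin n → ℝ) : ℝ :=
  esym n k lam + α * esym n (k - 1) lam

noncomputable def sumHessDel (n : ℕ) (α : ℝ) (k : ℤ) (p : Fin n) (lam : Fin n → ℝ) : ℝ :=
  esymDel n k p lam + α * esymDel n (k - 1) p lam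

def Gamma (n k : ℕ) : Set (Fin n → ℝ) :=
  {lam | ∀ m : ℤ, 1 ≤ m → m ≤ (k : ℤ) → 0 < esym n m lam}

def GammaTilde (n : ℕ) (α : ℝ) (k : ℕ) : Set (Fin n → ℝ) :=
  Gamma n (k - 1) ∩ {lam | 0 < sumHess n α (k : ℤ) lam}

noncomputable def etaMap (n : ℕ) (lam : Fin n → ℝ) : Fin n → ℝ :=
  fun i => (∑ j, lam j) - lam i

def GammaPrime (n : ℕ) (α : ℝ) (k : ℕ) : Set (Fin n → ℝ) :=
  {lam | etaMap n lam ∈ GammaTilde n α k}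

/-! With `p j = σ_j / C(n, j)` the inequality reads `p k * p (l - 1) ≤ p (k - 1) * p l`, and on
`Γ_{k-1}` every `p j` with `j < k` is positive. If `σ_k ≤ 0` the left side is nonpositive. If
`σ_k > 0`, all of `p 0, …, p k` are positive and the inequality follows by chaining Newton's
inequalities `p i * p (i + 2) ≤ p (i + 1) ^ 2`. These hold for every real multiset: differentiating
`∏ (X - r)` keeps it real-rooted (Rolle) and preserves the means `p j` for `j < n`, which reduces
them to the case `i + 2 = n`. There, with `x i = ∏_{j ≠ i} λ j`, one has `σ_{n-1} = ∑ x i` and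
`2 σ_{n-2} σ_n = ∑_{i ≠ j} x i x j`, so the inequality is Cauchy–Schwarz for the `x i`. -/

open Polynomial

namespace Finset

variable {ι : Type*} [DecidableEq ι]

theorem sum_sum_powersetCard_erase {M : Type*} [AddCommMonoid M] (A : Finset ι)
    (g : Finset ι → M) (m : ℕ) :
    ∑ i ∈ A, ∑ t ∈ (A.erase i).powersetCard m, g t = (#A - m) • ∑ t ∈ A.powersetCard m, g t := by
  rw [sum_comm' (t' := A.powersetCard m) (s' := fun t => A \ t), smul_sum]
  · refine sum_congr rfl fun t ht => ?_
    rw [mem_powersetCard] at ht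
    rw [sum_const, card_sdiff_of_subset ht.1, ht.2]
  · intro i t
    simp only [mem_powersetCard, subset_erase, mem_sdiff]
    tauto

theorem sum_powersetCard_card_sub_one {M : Type*} [AddCommMonoid M] {A : Finset ι}
    (hA : A.Nonempty) (g : Finset ι → M) :
    ∑ t ∈ A.powersetCard (#A - 1), g t = ∑ i ∈ A, g (A.erase i) := by
  have h := sum_sum_powersetCard_erase A g (#A - 1)
  rw [show #A - (#A - 1) = 1 by have := hA.card_pos; omega, one_smul] at h
  rw [← h]
  refine sum_congr rfl fun i hi => ?_
  rw [← card_erase_of_mem hi, powersetCard_self, sum_singleton]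

theorem two_mul_card_mul_esymm_le (A : Finset ι) (f : ι → ℝ) (hA : 2 ≤ #A) :
    2 * #A * ((A.val.map f).esymm (#A - 2) * (A.val.map f).esymm #A)
      ≤ (#A - 1) * (A.val.map f).esymm (#A - 1) ^ 2 := by
  simp only [esymm_map_val, powersetCard_self, sum_singleton]
  have hA0 : A.Nonempty := card_pos.1 (by omega)
  set P := ∏ y ∈ A, f y
  set x : ι → ℝ := fun i => ∏ y ∈ A.erase i, f y
  have hx_mul : ∀ i ∈ A, ∀ j ∈ A.erase i, x i * x j = P * ∏ y ∈ (A.erase i).erase j, f y := by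
    intro i _ j hj
    have hxi : x i = f j * ∏ y ∈ (A.erase i).erase j, f y := (mul_prod_erase _ f hj).symm
    have hxj : f j * x j = P := mul_prod_erase A f (mem_of_mem_erase hj)
    rw [hxi, ← hxj]
    ring
  have hpairs : ∑ i ∈ A, ∑ j ∈ A.erase i, x i * x j
      = 2 * (P * ∑ t ∈ A.powersetCard (#A - 2), ∏ y ∈ t, f y) := by
    calc ∑ i ∈ A, ∑ j ∈ A.erase i, x i * x j
        = ∑ i ∈ A, P * ∑ t ∈ (A.erase i).powersetCard (#A - 2), ∏ y ∈ t, f y := by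
          refine sum_congr rfl fun i hi => ?_
          have hcard : #(A.erase i) = #A - 1 := card_erase_of_mem hi
          rw [sum_congr rfl (hx_mul i hi), ← mul_sum, show #A - 2 = #(A.erase i) - 1 by omega,
            sum_powersetCard_card_sub_one (card_pos.1 (by omega))]
      _ = 2 * (P * ∑ t ∈ A.powersetCard (#A - 2), ∏ y ∈ t, f y) := by
          rw [← mul_sum, sum_sum_powersetCard_erase, show #A - (#A - 2) = 2 by omega, two_smul]
          ring
  have hsq : ∑ i ∈ A, ∑ j ∈ A.erase i, x i * x j = (∑ i ∈ A, x i) ^ 2 - ∑ i ∈ A, x i ^ 2 := by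
    rw [sq, sum_mul_sum, ← sum_sub_distrib]
    refine sum_congr rfl fun i hi => ?_
    rw [sq, sum_erase_eq_sub hi]
  have hcauchy : (∑ i ∈ A, x i) ^ 2 ≤ #A * ∑ i ∈ A, x i ^ 2 := sq_sum_le_card_mul_sum_sq
  rw [sum_powersetCard_card_sub_one hA0]
  nlinarith

end Finset

namespace Multiset

noncomputable def esymmMean (s : Multiset ℝ) (j : ℕ) : ℝ :=
  s.esymm j / (card s).choose j

variable (s : Multiset ℝ)

theorem esymmMean_eq_zero_of_card_lt {j : ℕ} (hj : card s < j) : s.esymmMean j = 0 := by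
  rw [esymmMean, esymm, powersetCard_eq_empty _ hj, map_zero, sum_zero, zero_div]

theorem esymmMean_mul_esymmMean_le_sq_of_card_eq {i : ℕ} (hs : card s = i + 2) :
    s.esymmMean i * s.esymmMean (i + 2) ≤ s.esymmMean (i + 1) ^ 2 := by
  have h := Finset.two_mul_card_mul_esymm_le s.toEnumFinset Prod.fst
    (by rw [card_toEnumFinset]; omega)
  simp only [map_toEnumFinset_fst, card_toEnumFinset, hs, Nat.add_sub_cancel,
    show i + 2 - 1 = i + 1 by omega] at h
  have hc : ((i + 2).choose i : ℝ) = (i + 2) * (i + 1) / 2 := by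
    rw [Nat.choose_symm_add, Nat.cast_choose_two]
    push_cast
    ring
  simp only [esymmMean, hs, Nat.choose_self, Nat.choose_succ_self_right, hc]
  push_cast at h ⊢
  field_simp
  linear_combination ((i : ℝ) + 2) * h

theorem card_roots_derivative_prod_X_sub_C :
    card (derivative (s.map fun r => X - C r).prod).roots = card s - 1 := by
  have hle := card_roots_le_derivative (s.map fun r => X - C r).prod
  have hdeg := (card_roots' _).trans (natDegree_derivative_le (s.map fun r => X - C r).prod)
  rw [roots_multiset_prod_X_sub_C] at hle
  rw [natDegree_multiset_prod_X_sub_C_eq_card] at hdeg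
  omega

theorem card_mul_esymm_roots_derivative {j : ℕ} (hj : j < card s) :
    card s * (derivative (s.map fun r => X - C r).prod).roots.esymm j
      = (card s - j : ℕ) * s.esymm j := by
  set f := (s.map fun r => X - C r).prod
  set t := (derivative f).roots
  have hdeg : f.natDegree = card s := natDegree_multiset_prod_X_sub_C_eq_card s
  have hcard : card t = card s - 1 := card_roots_derivative_prod_X_sub_C s
  have hdeg' : (derivative f).natDegree = card s - 1 := by
    have h1 : card t ≤ (derivative f).natDegree := card_roots' _
    have h2 := natDegree_derivative_le f
    omega
  have hsplit : Splits (derivative f) := by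
    rw [splits_iff_card_roots, hcard, hdeg']
  have hlead : (derivative f).leadingCoeff = card s := by
    rw [leadingCoeff, hdeg', coeff_derivative, Nat.sub_add_cancel (by omega), ← hdeg,
      (monic_multiset_prod_of_monic _ _ fun r _ => monic_X_sub_C r).coeff_natDegree, one_mul,
      ← Nat.cast_add_one, Nat.sub_add_cancel (by omega)]
  have hcoeff := congrArg (coeff · (card s - 1 - j)) hsplit.eq_prod_roots
  rw [coeff_C_mul, hlead, prod_X_sub_C_coeff t (by omega), coeff_derivative,
    show card s - 1 - j + 1 = card s - j by omega, prod_X_sub_C_coeff s (by omega),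
    show card t - (card s - 1 - j) = j by omega, show card s - (card s - j) = j by omega,
    ← Nat.cast_add_one, show card s - 1 - j + 1 = card s - j by omega] at hcoeff
  refine mul_left_cancel₀ (pow_ne_zero j (neg_ne_zero.2 one_ne_zero) : (-1 : ℝ) ^ j ≠ 0) ?_
  linear_combination -hcoeff

theorem esymmMean_roots_derivative {j : ℕ} (hj : j < card s) :
    (derivative (s.map fun r => X - C r).prod).roots.esymmMean j = s.esymmMean j := by
  obtain ⟨m, hm⟩ : ∃ m, card s = m + 1 := ⟨card s - 1, by omega⟩
  have hroots := card_mul_esymm_roots_derivative s hj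
  have hchoose : (m.choose j * (m + 1) : ℝ) = (m + 1).choose j * (m + 1 - j : ℕ) := by
    exact_mod_cast Nat.choose_mul_succ_eq m j
  rw [hm] at hj hroots
  have hm0 : ((m + 1 : ℕ) : ℝ) * (m + 1 - j : ℕ) ≠ 0 :=
    mul_ne_zero (Nat.cast_ne_zero.2 (by omega)) (Nat.cast_ne_zero.2 (by omega))
  unfold esymmMean
  rw [card_roots_derivative_prod_X_sub_C, hm, Nat.add_sub_cancel,
    div_eq_div_iff (by exact_mod_cast (Nat.choose_pos (by omega)).ne')
      (by exact_mod_cast (Nat.choose_pos (by omega)).ne')]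
  refine mul_right_cancel₀ hm0 ?_
  push_cast at hroots hchoose ⊢
  linear_combination ((m + 1).choose j * ((m + 1 - j : ℕ) : ℝ)) * hroots
    - s.esymm j * ((m + 1 - j : ℕ) : ℝ) * hchoose

theorem esymmMean_mul_esymmMean_le_sq (s : Multiset ℝ) (i : ℕ) :
    s.esymmMean i * s.esymmMean (i + 2) ≤ s.esymmMean (i + 1) ^ 2 := by
  rcases lt_trichotomy (i + 2) (card s) with h | h | h
  · have h' := esymmMean_mul_esymmMean_le_sq (derivative (s.map fun r => X - C r).prod).roots i
    rwa [esymmMean_roots_derivative s (by omega : i < card s),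
      esymmMean_roots_derivative s (by omega : i + 1 < card s),
      esymmMean_roots_derivative s h] at h'
  · exact esymmMean_mul_esymmMean_le_sq_of_card_eq s h.symm
  · rw [esymmMean_eq_zero_of_card_lt s h, mul_zero]
    exact sq_nonneg _
termination_by card s
decreasing_by rw [card_roots_derivative_prod_X_sub_C]; omega

end Multiset

theorem mul_add_one_le_add_one_mul_of_log_concave {p : ℕ → ℝ} {a b : ℕ} (hab : a ≤ b)
    (hpos : ∀ j, a < j → j ≤ b + 1 → 0 < p j)
    (hp : ∀ j, a ≤ j → j + 2 ≤ b + 1 → p j * p (j + 2) ≤ p (j + 1) ^ 2) :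
    p a * p (b + 1) ≤ p (a + 1) * p b := by
  induction b, hab using Nat.le_induction with
  | base => rw [mul_comm]
  | succ b hab ih =>
    have ih' := ih (fun j h _ => hpos j h (by omega)) (fun j h _ => hp j h (by omega))
    have hb1 := hpos (b + 1) (by omega) (by omega)
    have hb2 := hpos (b + 2) (by omega) (by omega)
    have ha1 := hpos (a + 1) (by omega) (by omega)
    have hnewton := hp b hab (by omega)
    refine le_of_mul_le_mul_right ?_ hb1
    calc p a * p (b + 1 + 1) * p (b + 1) = p a * p (b + 1) * p (b + 2) := by ring
      _ ≤ p (a + 1) * p b * p (b + 2) := by gcongr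
      _ = p (a + 1) * (p b * p (b + 2)) := by ring
      _ ≤ p (a + 1) * p (b + 1) ^ 2 := by gcongr
      _ = p (a + 1) * p (b + 1) * p (b + 1) := by ring

theorem esym_natCast {n : ℕ} (j : ℕ) (lam : Fin n → ℝ) :
    esym n j lam = ((univ : Finset (Fin n)).val.map lam).esymm j := by
  rw [esym, if_pos (Int.natCast_nonneg j), Int.toNat_natCast, esymm_map_val]

theorem esym_div_choose_eq_esymmMean {n : ℕ} (j : ℕ) (lam : Fin n → ℝ) :
    esym n j lam / n.choose j = ((univ : Finset (Fin n)).val.map lam).esymmMean j := by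
  rw [esym_natCast, Multiset.esymmMean, Multiset.card_map, card_val, card_univ, Fintype.card_fin]

theorem esym_pos_of_mem_Gamma {n k j : ℕ} {lam : Fin n → ℝ} (hlam : lam ∈ Gamma n k)
    (hj : j ≤ k) : 0 < esym n j lam := by
  rcases Nat.eq_zero_or_pos j with rfl | hj0
  · rw [esym_natCast, Multiset.esymm, Multiset.powersetCard_zero_left]
    simp
  · exact hlam j (by exact_mod_cast hj0) (by exact_mod_cast hj)

theorem stmt5_general (n : ℕ) (α : ℝ) (k l : ℕ) (hl : 1 ≤ l) (hlk : l < k) (hkn : k ≤ n)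
    (lam : Fin n → ℝ) (hlam : lam ∈ GammaTilde n α k) :
    esym n ((k : ℤ) - 1) lam * esym n (l : ℤ) lam / ((n.choose (k - 1) : ℝ) * (n.choose l : ℝ))
      ≥ esym n (k : ℤ) lam * esym n ((l : ℤ) - 1) lam
        / ((n.choose k : ℝ) * (n.choose (l - 1) : ℝ)) := by
  rw [show (k : ℤ) - 1 = (k - 1 : ℕ) by omega, show (l : ℤ) - 1 = (l - 1 : ℕ) by omega, ge_iff_le,
    mul_div_mul_comm, mul_div_mul_comm]
  simp only [esym_div_choose_eq_esymmMean]
  set p := ((univ : Finset (Fin n)).val.map lam).esymmMean with hp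
  have hpos : ∀ j ≤ k - 1, 0 < p j := fun j hj => by
    rw [hp, ← esym_div_choose_eq_esymmMean]
    exact div_pos (esym_pos_of_mem_Gamma hlam.1 hj) (by exact_mod_cast Nat.choose_pos (by omega))
  rcases le_or_gt (p k) 0 with hk | hk
  · exact (mul_nonpos_of_nonpos_of_nonneg hk (hpos (l - 1) (by omega)).le).trans
      (mul_pos (hpos (k - 1) le_rfl) (hpos l (by omega))).le
  · have h := mul_add_one_le_add_one_mul_of_log_concave (p := p) (a := l - 1) (b := k - 1)
      (by omega) (fun j _ hj => if hjk : j = k then hjk ▸ hk else hpos j (by omega))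
      (fun j _ _ => Multiset.esymmMean_mul_esymmMean_le_sq _ j)
    rw [Nat.sub_add_cancel hl, Nat.sub_add_cancel (by omega : 1 ≤ k)] at h
    linarith

theorem stmt5 (n : ℕ) (α : ℝ) (hα : 0 ≤ α) (k l : ℕ) (hl : 1 ≤ l) (hlk : l < k) (hkn : k ≤ n)
    (lam : Fin n → ℝ) (hlam : lam ∈ GammaTilde n α k) :
    esym n ((k : ℤ) - 1) lam * esym n (l : ℤ) lam / ((n.choose (k - 1) : ℝ) * (n.choose l : ℝ))
      ≥ esym n (k : ℤ) lam * esym n ((l : ℤ) - 1) lam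
        / ((n.choose k : ℝ) * (n.choose (l - 1) : ℝ)) :=
  stmt5_general n α k l hl hlk hkn lam hlam
end

section
/- Suppose λ ∈ Γ̃_k, 0 ≤ l < k, 0 ≤ q < p, with k ≥ p and l ≥ q (and p > q). Then (S_k(λ)/S_l(λ))^{1/(k−l)} ≤ (S_p(λ)/S_q(λ))^{1/(p−q)}. -/
open Finset

section NewtonAux
open Multiset Polynomial

lemma esymm_zero' (s : Multiset ℝ) : s.esymm 0 = 1 := by
  simp [Multiset.esymm, Multiset.powersetCard_zero_left]

lemma esymm_cons (a : ℝ) (s : Multiset ℝ) (j : ℕ) :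
    (a ::ₘ s).esymm (j + 1) = s.esymm (j + 1) + a * s.esymm j := by
  rw [Multiset.esymm, Multiset.powersetCard_cons, Multiset.map_add, Multiset.sum_add,
    Multiset.map_map]
  rw [Multiset.esymm, Multiset.esymm]
  congr 1
  rw [← Multiset.sum_map_mul_left]
  congr 1
  apply Multiset.map_congr rfl
  intro t _
  simp [Multiset.prod_cons]

lemma esymm_eq_zero (s : Multiset ℝ) (j : ℕ) (h : Multiset.card s < j) : s.esymm j = 0 := by
  rw [Multiset.esymm, Multiset.powersetCard_eq_empty _ h]
  simp

lemma esymm_card (s : Multiset ℝ) : s.esymm (Multiset.card s) = s.prod := by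
  induction s using Multiset.induction with
  | empty => simp [esymm_zero']
  | cons a s ih =>
    rw [Multiset.card_cons, esymm_cons, ih, esymm_eq_zero s _ (Nat.lt_succ_self _),
      Multiset.prod_cons]
    ring

-- sum of squares identity
lemma sq_sum_eq (s : Multiset ℝ) :
    s.sum ^ 2 = (s.map (fun x => x ^ 2)).sum + 2 * s.esymm 2 := by
  induction s using Multiset.induction with
  | empty => rw [esymm_eq_zero 0 2 (by simp)]; simp
  | cons a s ih =>
    have h1 : (a ::ₘ s).esymm 2 = s.esymm 2 + a * s.esymm 1 := esymm_cons a s 1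
    have h2 : s.esymm 1 = s.sum := by
      rw [Multiset.esymm]
      rw [Multiset.powersetCard_one]
      rw [Multiset.map_map]
      simp
    simp only [Multiset.sum_cons, Multiset.map_cons, h1, h2]
    ring_nf
    nlinarith [ih]

lemma deriv_esymm (s : Multiset ℝ) (m : ℕ) (hm : Multiset.card s = m) (h1 : 1 ≤ m) :
    ∃ t : Multiset ℝ, Multiset.card t = m - 1 ∧
      ∀ j ≤ m - 1, (m : ℝ) * t.esymm j = ((m - j : ℕ) : ℝ) * s.esymm j := by
  classical
  set f : Polynomial ℝ := (s.map (fun r => X + C r)).prod with hf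
  have hfeq : f = ((s.map (fun r => -r)).map (fun a => X - C a)).prod := by
    rw [hf, Multiset.map_map]
    congr 1
    apply Multiset.map_congr rfl
    intro r _
    simp [sub_neg_eq_add]
  have hroots : f.roots = s.map (fun r => -r) := by
    rw [hfeq, Polynomial.roots_multiset_prod_X_sub_C]
  have hmonic : f.Monic := by
    apply Polynomial.monic_multiset_prod_of_monic
    intro r _
    exact Polynomial.monic_X_add_C r
  have hdeg : f.natDegree = m := by
    have := Polynomial.card_roots' f
    rw [hroots] at this
    simp only [Multiset.card_map, hm] at this
    -- natDegree = sum of degrees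
    have h2 : f.natDegree = Multiset.card s := by
      rw [hf, Polynomial.natDegree_multiset_prod_of_monic]
      · rw [Multiset.map_map]
        have : Multiset.map (Polynomial.natDegree ∘ fun r => X + C r) s
            = Multiset.map (fun _ => 1) s := by
          apply Multiset.map_congr rfl
          intro r _
          simp [Polynomial.natDegree_X_add_C]
        rw [this, Multiset.map_const', Multiset.sum_replicate, smul_eq_mul, mul_one]
      · intro p hp
        rw [Multiset.mem_map] at hp
        obtain ⟨r, _, rfl⟩ := hp
        exact Polynomial.monic_X_add_C r
    rw [h2, hm]
  set g := Polynomial.derivative f with hg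
  have hcardf : Multiset.card f.roots = m := by rw [hroots]; simp [hm]
  have hcoeffg : ∀ kk : ℕ, g.coeff kk = f.coeff (kk + 1) * (kk + 1) :=
    fun kk => Polynomial.coeff_derivative f kk
  have hgtop : g.coeff (m - 1) = m := by
    rw [hcoeffg, Nat.sub_add_cancel h1]
    have : f.coeff m = 1 := by
      have := hmonic.leadingCoeff
      rwa [Polynomial.leadingCoeff, hdeg] at this
    rw [this, one_mul]
    push_cast [Nat.cast_sub h1]
    ring
  have hgne : g.coeff (m - 1) ≠ 0 := by
    rw [hgtop]
    exact Nat.cast_ne_zero.mpr (by omega)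
  have hdegg : g.natDegree = m - 1 := by
    have hlt : g.natDegree < m := by
      have := Polynomial.natDegree_derivative_lt (p := f) (by rw [hdeg]; omega)
      rwa [hdeg] at this
    have hge : m - 1 ≤ g.natDegree := Polynomial.le_natDegree_of_ne_zero hgne
    omega
  have hcardg : Multiset.card g.roots = m - 1 := by
    have h2 := Polynomial.card_roots_le_derivative f
    rw [hcardf] at h2
    rw [show Polynomial.derivative f = g from rfl] at h2
    have h3 := Polynomial.card_roots' g
    rw [hdegg] at h3
    omega
  have hlead : g.leadingCoeff = m := by
    rw [Polynomial.leadingCoeff, hdegg, hgtop]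
  refine ⟨g.roots.map (fun r => -r), by simp [hcardg], ?_⟩
  intro j hj
  have hkk : g.natDegree - (m - 1 - j) = j := by omega
  have hveta := Polynomial.coeff_eq_esymm_roots_of_card (p := g)
    (by rw [hcardg, hdegg]) (k := m - 1 - j) (by omega)
  rw [hlead, hkk] at hveta
  have hfc : f.coeff ((m - 1 - j) + 1) = s.esymm j := by
    have hle : (m - 1 - j) + 1 ≤ Multiset.card s := by omega
    rw [hf, Multiset.prod_X_add_C_coeff s hle, hm]
    congr 1
    omega
  have := hcoeffg (m - 1 - j)
  rw [hveta, hfc] at this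
  rw [Multiset.esymm_neg]
  have hj2 : ((m - 1 - j : ℕ) : ℝ) + 1 = ((m - j : ℕ) : ℝ) := by
    have e1 : m - 1 - j = m - (j + 1) := by omega
    rw [e1, Nat.cast_sub (by omega : j + 1 ≤ m), Nat.cast_sub (by omega : j ≤ m)]
    push_cast
    ring
  rw [hj2] at this
  linear_combination this

lemma ms_cauchy (s : Multiset ℝ) :
    s.sum ^ 2 ≤ (Multiset.card s : ℝ) * (s.map (fun x => x ^ 2)).sum := by
  induction s using Multiset.induction with
  | empty => simp
  | cons a s ih =>
    simp only [Multiset.sum_cons, Multiset.map_cons, Multiset.card_cons]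
    push_cast
    rcases eq_or_ne (Multiset.card s) 0 with h0 | h0
    · rw [Multiset.card_eq_zero] at h0
      subst h0
      simp
    · have hn : (1 : ℝ) ≤ (Multiset.card s : ℝ) := by
        exact_mod_cast Nat.one_le_iff_ne_zero.mpr h0
      nlinarith [sq_nonneg ((Multiset.card s : ℝ) * a - s.sum), ih,
        sq_nonneg s.sum, sq_nonneg a]

noncomputable def pnorm (s : Multiset ℝ) (i : ℕ) : ℝ :=
  s.esymm i / ((Multiset.card s).choose i)

lemma choose_id (m j : ℕ) (hj : j + 1 ≤ m) :
    m * (m - 1).choose j = m.choose j * (m - j) := by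
  have h1 : m = (m - 1) + 1 := by omega
  calc m * (m - 1).choose j = ((m - 1) + 1) * (m - 1).choose j := by rw [← h1]
    _ = ((m - 1) + 1).choose (j + 1) * (j + 1) := Nat.add_one_mul_choose_eq (m - 1) j
    _ = m.choose (j + 1) * (j + 1) := by rw [← h1]
    _ = m.choose j * (m - j) := Nat.choose_succ_right_eq m j

lemma pnorm_deriv (s t : Multiset ℝ) (m : ℕ) (hs : Multiset.card s = m)
    (ht : Multiset.card t = m - 1) (h1 : 1 ≤ m)
    (h : ∀ j ≤ m - 1, (m : ℝ) * t.esymm j = ((m - j : ℕ) : ℝ) * s.esymm j)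
    (j : ℕ) (hj : j ≤ m - 1) : pnorm t j = pnorm s j := by
  have hmj : 0 < m - j := by omega
  have hc1 : 0 < (m - 1).choose j := Nat.choose_pos (by omega)
  have hc2 : 0 < m.choose j := Nat.choose_pos (by omega)
  rw [pnorm, pnorm, hs, ht]
  rw [div_eq_div_iff (by exact_mod_cast hc1.ne') (by exact_mod_cast hc2.ne')]
  have key := h j hj
  have hid : (m : ℝ) * ((m - 1).choose j : ℝ) = (m.choose j : ℝ) * ((m - j : ℕ) : ℝ) := by
    exact_mod_cast congrArg (Nat.cast : ℕ → ℝ) (choose_id m j (by omega))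
  have hm0 : (m : ℝ) ≠ 0 := by exact_mod_cast (by omega : m ≠ 0)
  refine mul_left_cancel₀ hm0 ?_
  calc (m:ℝ) * (t.esymm j * (m.choose j : ℝ)) = ((m:ℝ) * t.esymm j) * (m.choose j : ℝ) := by ring
      _ = ((m - j : ℕ) : ℝ) * s.esymm j * (m.choose j : ℝ) := by rw [key]
      _ = s.esymm j * ((m.choose j : ℝ) * ((m - j : ℕ) : ℝ)) := by ring
      _ = s.esymm j * ((m:ℝ) * ((m - 1).choose j : ℝ)) := by rw [← hid]
      _ = (m:ℝ) * (s.esymm j * ((m - 1).choose j : ℝ)) := by ring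

lemma newton_base (s : Multiset ℝ) (m : ℕ) (hs : Multiset.card s = m) (h2 : 2 ≤ m) :
    pnorm s 0 * pnorm s 2 ≤ pnorm s 1 ^ 2 := by
  have hcs := ms_cauchy s
  have hsq := sq_sum_eq s
  rw [hs] at hcs
  have h1 : s.esymm 1 = s.sum := by
    rw [Multiset.esymm, Multiset.powersetCard_one, Multiset.map_map]
    simp
  have hm : (0:ℝ) < m := by exact_mod_cast (by omega : 0 < m)
  have hceq : ((m.choose 2 : ℕ):ℝ) * 2 = (m:ℝ) * ((m:ℝ) - 1) := by
    have he : Even (m * (m - 1)) := by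
      have := Nat.even_mul_succ_self (m - 1)
      rw [Nat.sub_add_cancel (by omega : 1 ≤ m)] at this
      rwa [mul_comm]
    have hn : m.choose 2 * 2 = m * (m - 1) := by
      rw [Nat.choose_two_right]
      exact Nat.div_mul_cancel he.two_dvd
    have := congrArg (Nat.cast : ℕ → ℝ) hn
    push_cast [Nat.cast_sub (by omega : 1 ≤ m)] at this
    linarith
  have hcpos : (0:ℝ) < ((m.choose 2 : ℕ):ℝ) := by
    exact_mod_cast Nat.choose_pos h2
  rw [pnorm, pnorm, pnorm, esymm_zero', h1, hs, Nat.choose_zero_right,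
    Nat.choose_one_right]
  rw [Nat.cast_one, div_one, one_mul, div_pow,
    div_le_div_iff₀ hcpos (by positivity)]
  nlinarith [mul_nonneg hm.le (sub_nonneg.mpr hcs), sq_nonneg s.sum]

lemma esymm_inv (s : Multiset ℝ) (h0 : (0:ℝ) ∉ s) :
    ∀ j ≤ Multiset.card s,
      (s.map (fun x => x⁻¹)).esymm j * s.prod = s.esymm (Multiset.card s - j) := by
  induction s using Multiset.induction with
  | empty =>
    intro j hj
    have hj0 : j = 0 := by simpa using hj
    subst hj0
    simp [esymm_zero']
  | cons a s ih =>
    intro j hj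
    have ha : a ≠ 0 := fun h => h0 (h ▸ Multiset.mem_cons_self a s)
    have h0' : (0:ℝ) ∉ s := fun h => h0 (Multiset.mem_cons_of_mem h)
    set c := Multiset.card s with hc
    rw [Multiset.map_cons, Multiset.prod_cons]
    rcases Nat.eq_zero_or_pos j with rfl | hj1
    · rw [esymm_zero', one_mul, Multiset.card_cons, Nat.sub_zero, ← Multiset.card_cons a s,
        esymm_card, Multiset.prod_cons]
    · obtain ⟨i, rfl⟩ : ∃ i, j = i + 1 := ⟨j - 1, by omega⟩
      rw [esymm_cons]
      rw [Multiset.card_cons] at hj ⊢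
      rcases Nat.lt_or_ge i c with hic | hic
      · -- i + 1 ≤ c
        have e1 : (Multiset.map (fun x => x⁻¹) s).esymm (i+1) * s.prod = s.esymm (c - (i+1)) :=
          ih h0' (i+1) (by omega)
        have e2 : (Multiset.map (fun x => x⁻¹) s).esymm i * s.prod = s.esymm (c - i) :=
          ih h0' i (by omega)
        have hsub : c + 1 - (i + 1) = (c - (i+1)) + 1 := by omega
        rw [hsub, esymm_cons]
        have hsub2 : c - (i + 1) + 1 = c - i := by omega
        rw [hsub2]
        calc ((Multiset.map (fun x => x⁻¹) s).esymm (i+1) + a⁻¹ * (Multiset.map (fun x => x⁻¹) s).esymm i) * (a * s.prod)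
            = a * ((Multiset.map (fun x => x⁻¹) s).esymm (i+1) * s.prod)
              + (a⁻¹ * a) * ((Multiset.map (fun x => x⁻¹) s).esymm i * s.prod) := by ring
          _ = a * s.esymm (c - (i+1)) + 1 * s.esymm (c - i) := by
              rw [e1, e2, inv_mul_cancel₀ ha]
          _ = s.esymm (c - (i+1)) * a + s.esymm (c - i) := by ring
          _ = s.esymm (c - i) + a * s.esymm (c - (i+1)) := by ring
      · -- i = c, j = c + 1
        have hie : i = c := by omega
        have e0 : (Multiset.map (fun x => x⁻¹) s).esymm (i+1) = 0 :=
          esymm_eq_zero _ _ (by rw [Multiset.card_map, ← hc, hie]; omega)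
        have e2 : (Multiset.map (fun x => x⁻¹) s).esymm i * s.prod = s.esymm 0 := by
          have := ih h0' i (by omega)
          rwa [show c - i = 0 by omega] at this
        rw [e0, show c + 1 - (i + 1) = 0 by omega]
        rw [esymm_zero'] at e2 ⊢
        calc (0 + a⁻¹ * (Multiset.map (fun x => x⁻¹) s).esymm i) * (a * s.prod)
            = (a⁻¹ * a) * ((Multiset.map (fun x => x⁻¹) s).esymm i * s.prod) := by ring
          _ = 1 := by rw [e2, inv_mul_cancel₀ ha, one_mul]

lemma pnorm_inv (s : Multiset ℝ) (m : ℕ) (hs : Multiset.card s = m) (h0 : (0:ℝ) ∉ s)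
    (i : ℕ) (hi : i ≤ m) :
    pnorm (s.map (fun x => x⁻¹)) i = pnorm s (m - i) / s.prod := by
  have hpr : s.prod ≠ 0 := Multiset.prod_ne_zero h0
  have hcm : Multiset.card (s.map (fun x => x⁻¹)) = m := by simp [hs]
  have he := esymm_inv s h0 i (hs ▸ hi)
  rw [hs] at he
  have hch : m.choose (m - i) = m.choose i := Nat.choose_symm hi
  rw [pnorm, pnorm, hcm, hs, hch]
  rw [div_div]
  rw [eq_div_iff (by
    apply mul_ne_zero
    · exact_mod_cast (Nat.choose_pos hi).ne'
    · exact hpr)]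
  calc (s.map (fun x => x⁻¹)).esymm i / (m.choose i : ℝ) * ((m.choose i : ℝ) * s.prod)
      = ((s.map (fun x => x⁻¹)).esymm i * s.prod) * ((m.choose i : ℝ) / (m.choose i : ℝ)) := by
        ring
    _ = s.esymm (m - i) := by
        rw [he, div_self (by exact_mod_cast (Nat.choose_pos hi).ne' : ((m.choose i : ℕ):ℝ) ≠ 0), mul_one]

theorem newton_main : ∀ m : ℕ, ∀ s : Multiset ℝ, Multiset.card s = m →
    ∀ j, j + 2 ≤ m → pnorm s j * pnorm s (j + 2) ≤ pnorm s (j + 1) ^ 2 := by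
  intro m
  induction m using Nat.strong_induction_on with
  | _ m ih =>
  have hlt : ∀ s : Multiset ℝ, Multiset.card s = m → ∀ j, j + 2 < m →
      pnorm s j * pnorm s (j + 2) ≤ pnorm s (j + 1) ^ 2 := by
    intro s hs j hj
    obtain ⟨t, ht, hrel⟩ := deriv_esymm s m hs (by omega)
    have hpe : ∀ i ≤ m - 1, pnorm t i = pnorm s i :=
      pnorm_deriv s t m hs ht (by omega) hrel
    rw [← hpe j (by omega), ← hpe (j+1) (by omega), ← hpe (j+2) (by omega)]
    exact ih (m - 1) (by omega) t ht j (by omega)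
  have hbase : ∀ s : Multiset ℝ, Multiset.card s = m → 2 ≤ m →
      pnorm s 0 * pnorm s 2 ≤ pnorm s 1 ^ 2 := by
    intro s hs h2
    rcases Nat.lt_or_ge 2 m with h | h
    · exact hlt s hs 0 h
    · exact newton_base s m hs h2
  intro s hs j hj
  rcases Nat.lt_or_ge (j + 2) m with h | h
  · exact hlt s hs j h
  have hm : j + 2 = m := by omega
  by_cases h0 : (0:ℝ) ∈ s
  · have : pnorm s (j + 2) = 0 := by
      rw [pnorm, hm, ← hs, esymm_card, Multiset.prod_eq_zero h0]
      simp
    rw [this, mul_zero]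
    exact sq_nonneg _
  · set t := s.map (fun x => x⁻¹) with htdef
    have hct : Multiset.card t = m := by simp [htdef, hs]
    have hb := hbase t hct (by omega)
    have hp0 : pnorm t 0 = pnorm s m / s.prod := by
      have := pnorm_inv s m hs h0 0 (by omega)
      rwa [Nat.sub_zero] at this
    have hp1 : pnorm t 1 = pnorm s (j + 1) / s.prod := by
      have := pnorm_inv s m hs h0 1 (by omega)
      rwa [show m - 1 = j + 1 by omega] at this
    have hp2 : pnorm t 2 = pnorm s j / s.prod := by
      have := pnorm_inv s m hs h0 2 (by omega)
      rwa [show m - 2 = j by omega] at this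
    rw [hp0, hp1, hp2] at hb
    have hpr : s.prod ≠ 0 := Multiset.prod_ne_zero h0
    have hpr2 : (0:ℝ) < s.prod ^ 2 := by positivity
    rw [div_mul_div_comm, div_pow, show s.prod * s.prod = s.prod ^ 2 from (sq s.prod).symm,
      div_le_div_iff₀ hpr2 hpr2] at hb
    rw [hm]
    calc pnorm s j * pnorm s m = pnorm s m * pnorm s j := by ring
      _ ≤ pnorm s (j+1) ^ 2 := le_of_mul_le_mul_right (by linarith [hb]) hpr2

lemma slope_chain (g : ℕ → ℝ) (k : ℕ)
    (hconc : ∀ i, i + 2 ≤ k → g i + g (i + 2) ≤ 2 * g (i + 1))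
    (q l p : ℕ) (hql : q ≤ l) (hlk : l < k) (hqp : q < p) (hpk : p ≤ k) :
    ((p : ℝ) - q) * (g k - g l) ≤ ((k : ℝ) - l) * (g p - g q) := by
  set d : ℕ → ℝ := fun i => g (i + 1) - g i with hd
  have dstep : ∀ j, j + 2 ≤ k → d (j + 1) ≤ d j := by
    intro j hj
    have := hconc j hj
    simp only [hd]
    linarith
  have dmono : ∀ i j, i ≤ j → j + 1 ≤ k → d j ≤ d i := by
    intro i j hij hjk
    induction j with
    | zero => simp_all
    | succ j IH =>
      rcases Nat.eq_or_lt_of_le hij with rfl | hlt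
      · exact le_refl _
      · exact (dstep j (by omega)).trans (IH (by omega) (by omega))
  have hsum : ∀ a b : ℕ, a ≤ b → g b - g a = ∑ i ∈ Finset.Ico a b, d i := by
    intro a b hab
    rw [Finset.sum_Ico_eq_sub _ hab, Finset.sum_range_sub g, Finset.sum_range_sub g]
    ring
  -- sums
  set A := ∑ i ∈ Finset.Ico q l, d i
  set B := ∑ i ∈ Finset.Ico l k, d i
  set C := ∑ i ∈ Finset.Ico q p, d i
  set D := ∑ i ∈ Finset.Ico p k, d i
  have hAB : A + B = ∑ i ∈ Finset.Ico q k, d i := Finset.sum_Ico_consecutive _ hql (le_of_lt hlk)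
  have hCD : C + D = ∑ i ∈ Finset.Ico q k, d i := Finset.sum_Ico_consecutive _ (le_of_lt hqp) hpk
  -- Claim 1: (l-q) * B ≤ (k-l) * A
  have claim1 : ((l : ℝ) - q) * B ≤ ((k : ℝ) - l) * A := by
    rcases Nat.eq_or_lt_of_le hql with rfl | hql'
    · simp [A]
    · have hB : B ≤ ((k - l : ℕ) : ℝ) * d l := by
        have := Finset.sum_le_card_nsmul (Finset.Ico l k) d (d l) ?_
        · rwa [Nat.card_Ico, nsmul_eq_mul] at this
        · intro x hx
          rw [Finset.mem_Ico] at hx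
          exact dmono l x hx.1 (by omega)
      have hA : ((l - q : ℕ) : ℝ) * d (l - 1) ≤ A := by
        have := Finset.card_nsmul_le_sum (Finset.Ico q l) d (d (l - 1)) ?_
        · rwa [Nat.card_Ico, nsmul_eq_mul] at this
        · intro x hx
          rw [Finset.mem_Ico] at hx
          exact dmono x (l - 1) (by omega) (by omega)
      have hdl : d l ≤ d (l - 1) := dmono (l - 1) l (by omega) (by omega)
      have c1 : ((l : ℝ) - q) = ((l - q : ℕ) : ℝ) := by
        rw [Nat.cast_sub hql]
      have c2 : ((k : ℝ) - l) = ((k - l : ℕ) : ℝ) := by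
        rw [Nat.cast_sub (le_of_lt hlk)]
      have hpos1 : (0:ℝ) ≤ ((l - q : ℕ) : ℝ) := Nat.cast_nonneg _
      have hpos2 : (0:ℝ) ≤ ((k - l : ℕ) : ℝ) := Nat.cast_nonneg _
      rw [c1, c2]
      calc ((l - q : ℕ) : ℝ) * B ≤ ((l - q : ℕ) : ℝ) * (((k - l : ℕ) : ℝ) * d l) := by
            apply mul_le_mul_of_nonneg_left hB hpos1
        _ ≤ ((l - q : ℕ) : ℝ) * (((k - l : ℕ) : ℝ) * d (l - 1)) := by
            apply mul_le_mul_of_nonneg_left (mul_le_mul_of_nonneg_left hdl hpos2) hpos1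
        _ = ((k - l : ℕ) : ℝ) * (((l - q : ℕ) : ℝ) * d (l - 1)) := by ring
        _ ≤ ((k - l : ℕ) : ℝ) * A := mul_le_mul_of_nonneg_left hA hpos2
  -- Claim 2: (p-q) * D ≤ (k-p) * C
  have claim2 : ((p : ℝ) - q) * D ≤ ((k : ℝ) - p) * C := by
    rcases Nat.eq_or_lt_of_le hpk with rfl | hpk'
    · simp [D]
    · have hD : D ≤ ((k - p : ℕ) : ℝ) * d p := by
        have := Finset.sum_le_card_nsmul (Finset.Ico p k) d (d p) ?_
        · rwa [Nat.card_Ico, nsmul_eq_mul] at this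
        · intro x hx
          rw [Finset.mem_Ico] at hx
          exact dmono p x hx.1 (by omega)
      have hC : ((p - q : ℕ) : ℝ) * d (p - 1) ≤ C := by
        have := Finset.card_nsmul_le_sum (Finset.Ico q p) d (d (p - 1)) ?_
        · rwa [Nat.card_Ico, nsmul_eq_mul] at this
        · intro x hx
          rw [Finset.mem_Ico] at hx
          exact dmono x (p - 1) (by omega) (by omega)
      have hdp : d p ≤ d (p - 1) := dmono (p - 1) p (by omega) (by omega)
      have c1 : ((p : ℝ) - q) = ((p - q : ℕ) : ℝ) := by
        rw [Nat.cast_sub (le_of_lt hqp)]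
      have c2 : ((k : ℝ) - p) = ((k - p : ℕ) : ℝ) := by
        rw [Nat.cast_sub (le_of_lt hpk')]
      rw [c1, c2]
      calc ((p - q : ℕ) : ℝ) * D ≤ ((p - q : ℕ) : ℝ) * (((k - p : ℕ) : ℝ) * d p) :=
            mul_le_mul_of_nonneg_left hD (Nat.cast_nonneg _)
        _ ≤ ((p - q : ℕ) : ℝ) * (((k - p : ℕ) : ℝ) * d (p - 1)) :=
            mul_le_mul_of_nonneg_left (mul_le_mul_of_nonneg_left hdp (Nat.cast_nonneg _))
              (Nat.cast_nonneg _)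
        _ = ((k - p : ℕ) : ℝ) * (((p - q : ℕ) : ℝ) * d (p - 1)) := by ring
        _ ≤ ((k - p : ℕ) : ℝ) * C := mul_le_mul_of_nonneg_left hC (Nat.cast_nonneg _)
  -- combine
  have hgB : g k - g l = B := hsum l k (le_of_lt hlk)
  have hgC : g p - g q = C := hsum q p (le_of_lt hqp)
  rw [hgB, hgC]
  have hkq : (0:ℝ) < (k : ℝ) - q := by
    have : q < k := lt_of_le_of_lt hql hlk
    have := (Nat.cast_lt (α := ℝ)).mpr this
    linarith
  -- (k-q)(p-q) B ≤ (p-q)(k-l)(A+B)?? derive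
  have key : ((k : ℝ) - q) * (((p : ℝ) - q) * B) ≤ ((k : ℝ) - q) * (((k : ℝ) - l) * C) := by
    have hpq0 : (0:ℝ) ≤ (p : ℝ) - q := by
      have := (Nat.cast_le (α := ℝ)).mpr (le_of_lt hqp)
      linarith
    have hkl0 : (0:ℝ) ≤ (k : ℝ) - l := by
      have := (Nat.cast_le (α := ℝ)).mpr (le_of_lt hlk)
      linarith
    -- (k-q) * (p-q) * B = (p-q) * ((k-q) * B) = (p-q)*((k-l)B + (l-q)B)
    -- ≤ (p-q)*((k-l)B + (k-l)A) = (p-q)(k-l)(A+B) = (k-l)(p-q)(C+D)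
    have s1 : ((p:ℝ) - q) * (((k:ℝ) - q) * B) ≤ ((p:ℝ) - q) * (((k:ℝ) - l) * (A + B)) := by
      apply mul_le_mul_of_nonneg_left _ hpq0
      nlinarith [claim1]
    have s2 : ((k:ℝ) - l) * (((p:ℝ) - q) * (C + D)) ≤ ((k:ℝ) - l) * (((k:ℝ) - q) * C) := by
      apply mul_le_mul_of_nonneg_left _ hkl0
      nlinarith [claim2]
    have e : A + B = C + D := by rw [hAB, hCD]
    rw [e] at s1
    linarith [s1, s2]
  have := le_of_mul_le_mul_left key hkq
  linarith

-- binomial log-concavity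
lemma choose_logconcave (N j : ℕ) (h : j + 2 ≤ N) :
    N.choose j * N.choose (j + 2) ≤ N.choose (j + 1) ^ 2 := by
  have h1 : N.choose (j + 1) * (j + 1) = N.choose j * (N - j) := Nat.choose_succ_right_eq N j
  have h2 : N.choose (j + 2) * (j + 2) = N.choose (j + 1) * (N - (j + 1)) :=
    Nat.choose_succ_right_eq N (j + 1)
  have key : N.choose j * N.choose (j + 2) * ((N - j) * (j + 2))
      = N.choose (j + 1) ^ 2 * ((j + 1) * (N - (j + 1))) := by
    calc N.choose j * N.choose (j + 2) * ((N - j) * (j + 2))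
        = (N.choose j * (N - j)) * (N.choose (j + 2) * (j + 2)) := by ring
      _ = (N.choose (j + 1) * (j + 1)) * (N.choose (j + 1) * (N - (j + 1))) := by
          rw [← h1, h2]
      _ = N.choose (j + 1) ^ 2 * ((j + 1) * (N - (j + 1))) := by ring
  have hle : (j + 1) * (N - (j + 1)) ≤ (j + 2) * (N - j) :=
    Nat.mul_le_mul (by omega) (by omega)
  have hK : 0 < (N - j) * (j + 2) := by
    have : 0 < N - j := by omega
    positivity
  apply Nat.le_of_mul_le_mul_right _ hK
  calc N.choose j * N.choose (j + 2) * ((N - j) * (j + 2))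
      = N.choose (j + 1) ^ 2 * ((j + 1) * (N - (j + 1))) := key
    _ ≤ N.choose (j + 1) ^ 2 * ((j + 2) * (N - j)) := Nat.mul_le_mul_left _ hle
    _ = N.choose (j + 1) ^ 2 * ((N - j) * (j + 2)) := by ring

-- esym at natural index
lemma esym_nat (n : ℕ) (i : ℕ) (lam : Fin n → ℝ) :
    esym n (i : ℤ) lam = ((Finset.univ : Finset (Fin n)).val.map lam).esymm i := by
  rw [esym, if_pos (by positivity), Finset.esymm_map_val]
  simp

lemma sumHess_esymm (n : ℕ) (α : ℝ) (lam : Fin n → ℝ) (j : ℕ) :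
    sumHess n α (j : ℤ) lam = (α ::ₘ (Finset.univ : Finset (Fin n)).val.map lam).esymm j := by
  cases j with
  | zero =>
    rw [sumHess, esymm_zero']
    have h1 : esym n (0 : ℤ) lam = 1 := by
      rw [esym, if_pos (le_refl (0:ℤ))]
      simp
    have h2 : esym n ((0 : ℤ) - 1) lam = 0 := by
      rw [esym, if_neg (by norm_num)]
    rw [Nat.cast_zero, h1, h2]
    ring
  | succ j =>
    rw [sumHess, esymm_cons]
    have e1 : ((j + 1 : ℕ) : ℤ) - 1 = (j : ℤ) := by push_cast; ring
    rw [e1, esym_nat, esym_nat]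


end NewtonAux

theorem stmt7 (n : ℕ) (α : ℝ) (hα : 0 ≤ α) (k l p q : ℕ)
    (hlk : l < k) (hkn : k ≤ n) (hqp : q < p) (hpk : p ≤ k) (hql : q ≤ l)
    (lam : Fin n → ℝ) (hlam : lam ∈ GammaTilde n α k) :
    (sumHess n α (k : ℤ) lam / sumHess n α (l : ℤ) lam) ^ ((1 : ℝ) / ((k : ℝ) - (l : ℝ)))
      ≤ (sumHess n α (p : ℤ) lam / sumHess n α (q : ℤ) lam) ^ ((1 : ℝ) / ((p : ℝ) - (q : ℝ))) := by
  obtain ⟨hG, hSk⟩ := hlam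
  set S : ℕ → ℝ := fun j => sumHess n α (j : ℤ) lam with hS
  -- positivity of esym for 1 ≤ m ≤ k - 1
  have hesym_pos : ∀ m : ℕ, 1 ≤ m → m ≤ k - 1 → 0 < esym n (m : ℤ) lam := by
    intro m h1 h2
    exact hG (m : ℤ) (by exact_mod_cast h1) (by exact_mod_cast h2)
  have hesym0 : esym n (0 : ℤ) lam = 1 := by
    rw [esym, if_pos (le_refl (0:ℤ))]
    simp
  have hpos : ∀ j ≤ k, 0 < S j := by
    intro j hj
    rcases Nat.eq_zero_or_pos j with rfl | hj1
    · show (0:ℝ) < sumHess n α ((0:ℕ) : ℤ) lam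
      rw [sumHess]
      have h2 : esym n ((0 : ℤ) - 1) lam = 0 := by
        rw [esym, if_neg (by norm_num)]
      rw [Nat.cast_zero, hesym0, h2]
      norm_num
    rcases Nat.eq_or_lt_of_le hj with rfl | hjk
    · exact hSk
    · -- 1 ≤ j ≤ k - 1
      show (0:ℝ) < sumHess n α (j : ℤ) lam
      rw [sumHess]
      have hj' : 0 < esym n (j : ℤ) lam := hesym_pos j hj1 (by omega)
      have hj'' : 0 ≤ esym n ((j : ℤ) - 1) lam := by
        rcases Nat.eq_or_lt_of_le hj1 with rfl | hj2
        · rw [show ((1:ℕ) : ℤ) - 1 = 0 by ring, hesym0]; norm_num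
        · have : ((j : ℤ) - 1) = ((j - 1 : ℕ) : ℤ) := by omega
          rw [this]
          exact le_of_lt (hesym_pos (j - 1) (by omega) (by omega))
      nlinarith [mul_nonneg hα hj'']
  -- Newton for S
  set M : Multiset ℝ := α ::ₘ (Finset.univ : Finset (Fin n)).val.map lam with hM
  have hcardM : Multiset.card M = n + 1 := by simp [hM]
  have hSM : ∀ j : ℕ, S j = M.esymm j := fun j => sumHess_esymm n α lam j
  have hSpn : ∀ j : ℕ, S j = pnorm M j * ((n+1).choose j) := by
    intro j
    rw [hSM j, pnorm, hcardM]
    rcases Nat.lt_or_ge (n+1) j with h | h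
    · rw [Nat.choose_eq_zero_of_lt h, esymm_eq_zero M j (by omega)]
      simp
    · rw [div_mul_cancel₀]
      exact_mod_cast (Nat.choose_pos h).ne'
  have hSnewton : ∀ j, j + 2 ≤ k → S j * S (j + 2) ≤ S (j + 1) ^ 2 := by
    intro j hj
    have hpn := newton_main (n + 1) M hcardM j (by omega)
    have hcc := choose_logconcave (n + 1) j (by omega)
    have hccR : ((n+1).choose j : ℝ) * ((n+1).choose (j+2) : ℝ) ≤ ((n+1).choose (j+1) : ℝ)^2 := by
      exact_mod_cast hcc
    rw [hSpn j, hSpn (j+1), hSpn (j+2)]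
    calc pnorm M j * ((n+1).choose j : ℝ) * (pnorm M (j+2) * ((n+1).choose (j+2) : ℝ))
        = (pnorm M j * pnorm M (j+2)) * (((n+1).choose j : ℝ) * ((n+1).choose (j+2) : ℝ)) := by
          ring
      _ ≤ pnorm M (j+1)^2 * (((n+1).choose j : ℝ) * ((n+1).choose (j+2) : ℝ)) := by
          apply mul_le_mul_of_nonneg_right hpn
          positivity
      _ ≤ pnorm M (j+1)^2 * ((n+1).choose (j+1) : ℝ)^2 := by
          apply mul_le_mul_of_nonneg_left hccR (sq_nonneg _)
      _ = (pnorm M (j+1) * ((n+1).choose (j+1) : ℝ))^2 := by ring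
  -- log concavity
  set g : ℕ → ℝ := fun j => Real.log (S j) with hg
  have hconc : ∀ i, i + 2 ≤ k → g i + g (i + 2) ≤ 2 * g (i + 1) := by
    intro i hi
    have h1 := hpos i (by omega)
    have h2 := hpos (i+1) (by omega)
    have h3 := hpos (i+2) (by omega)
    have := Real.log_le_log (by positivity) (hSnewton i hi)
    rw [Real.log_mul h1.ne' h3.ne', Real.log_pow] at this
    simp only [hg]
    push_cast at this
    linarith
  have hslope := slope_chain g k hconc q l p hql hlk hqp hpk
  -- final conversion
  have hSl := hpos l (by omega)
  have hSq := hpos q (by omega)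
  have hSp := hpos p (by omega)
  have hkl : (0:ℝ) < (k:ℝ) - l := by
    have := (Nat.cast_lt (α := ℝ)).mpr hlk
    linarith
  have hpq : (0:ℝ) < (p:ℝ) - q := by
    have := (Nat.cast_lt (α := ℝ)).mpr hqp
    linarith
  have hd1 : (0:ℝ) < S k / S l := div_pos hSk hSl
  have hd2 : (0:ℝ) < S p / S q := div_pos hSp hSq
  rw [show sumHess n α (k : ℤ) lam / sumHess n α (l : ℤ) lam = S k / S l from rfl,
    show sumHess n α (p : ℤ) lam / sumHess n α (q : ℤ) lam = S p / S q from rfl]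
  rw [Real.rpow_def_of_pos hd1, Real.rpow_def_of_pos hd2, Real.exp_le_exp]
  rw [Real.log_div hSk.ne' hSl.ne', Real.log_div hSp.ne' hSq.ne']
  rw [mul_one_div, mul_one_div, div_le_div_iff₀ hkl hpq]
  have e1 : Real.log (S k) - Real.log (S l) = g k - g l := rfl
  have e2 : Real.log (S p) - Real.log (S q) = g p - g q := rfl
  rw [e1, e2]
  linarith [hslope]
end
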